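/- Let q be a power of a prime p, let L = {a, a+d, …, a+(s−1)d} ⊆ {1,…,q−1} be an arithmetic progression with a, d positive integers, and suppose Σ_{ℓ∈L} v_p(ℓ) < max{(s−1)v_p(d) + v_p(q), s·v_p(d) + v_p(s!) + 1}. If F ⊆ 2^[n] satisfies that |A \ B| is congruent modulo q to some element of L for all distinct A, B ∈ F, then |F| ≤ Σ_{i=0}^{s} C(n, i). -/

import Mathlib

open Finset

lemma count_ge (pt s j : ℕ) (hpt : 0 < pt) :
    s / pt ≤ ((Finset.range s).filter (fun i => i ≡ j [MOD pt])).card := by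
  classical
  have hinj : Set.InjOn (fun r => j % pt + r * pt) ↑(Finset.range (s / pt)) := by
    intro x _ y _ h
    simp only at h
    have : x * pt = y * pt := by omega
    exact Nat.eq_of_mul_eq_mul_right hpt this
  have hmaps : ∀ r ∈ Finset.range (s / pt),
      (j % pt + r * pt) ∈ (Finset.range s).filter (fun i => i ≡ j [MOD pt]) := by
    intro r hr
    rw [Finset.mem_range] at hr
    rw [Finset.mem_filter, Finset.mem_range]
    constructor
    · have h1 : j % pt + r * pt < pt + r * pt := by
        have := Nat.mod_lt j hpt; omega
      have h2 : pt + r * pt = (r + 1) * pt := by ring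
      have h3 : (r + 1) * pt ≤ (s / pt) * pt := Nat.mul_le_mul_right _ (by omega)
      have h4 : (s / pt) * pt ≤ s := Nat.div_mul_le_self s pt
      omega
    · show (j % pt + r * pt) % pt = j % pt
      rw [Nat.add_mul_mod_self_right, Nat.mod_mod_of_dvd _ dvd_rfl]
  calc s / pt = (Finset.range (s / pt)).card := by simp
    _ ≤ _ := Finset.card_le_card_of_injOn _ hmaps hinj

lemma dvd_dist_iff (w i j : ℕ) : (w:ℤ) ∣ ((j:ℤ) - i) ↔ w ∣ Nat.dist j i := by
  rcases le_total i j with h | h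
  · rw [Nat.dist_eq_sub_of_le_right h, ← Int.natCast_dvd_natCast]
    push_cast [h]
    rfl
  · rw [Nat.dist_eq_sub_of_le h, ← Int.natCast_dvd_natCast]
    push_cast [h]
    rw [show (j:ℤ) - i = -((i:ℤ) - j) by ring, dvd_neg]

lemma arith (p m a d s : ℕ) (hp : p.Prime) (hm : 1 ≤ m) (hs : 1 ≤ s) (ha : 0 < a) (hd : 0 < d)
    (hL : ∀ i < s, a + i * d ≤ p ^ m - 1)
    (hval : ∑ i ∈ Finset.range s, padicValNat p (a + i * d) <
      max ((s - 1) * padicValNat p d + m)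
        (s * padicValNat p d + padicValNat p (Nat.factorial s) + 1))
    (c j : ℕ) (hj : j < s) (hc : c ≡ a + j * d [MOD p ^ m]) :
    (p:ℤ) ^ (∑ i ∈ Finset.range s, padicValNat p (a + i * d) + 1) ∣
      ∏ i ∈ Finset.range s, ((c:ℤ) - (a + i * d)) := by
  classical
  haveI : Fact p.Prime := ⟨hp⟩
  have hp1 : 1 < p := hp.one_lt
  set e := padicValNat p d with he
  set V := ∑ i ∈ Finset.range s, padicValNat p (a + i * d) with hV
  -- positivity of the L i
  have hLpos : ∀ i, 0 < a + i * d := fun i => by positivity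
  -- each valuation < m
  have hvlt : ∀ i < s, padicValNat p (a + i * d) < m := by
    intro i hi
    by_contra hcon
    push_neg at hcon
    have hdvd : p ^ m ∣ a + i * d :=
      dvd_trans (pow_dvd_pow p hcon) pow_padicValNat_dvd
    have := Nat.le_of_dvd (hLpos i) hdvd
    have hle := hL i hi
    have hpm : 1 ≤ p ^ m := Nat.one_le_pow _ _ (by omega)
    omega
  have hVle : V ≤ s * (m - 1) := by
    rw [hV]
    calc ∑ i ∈ Finset.range s, padicValNat p (a + i * d)
        ≤ ∑ _i ∈ Finset.range s, (m - 1) := by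
          apply Finset.sum_le_sum
          intro i hi
          have := hvlt i (Finset.mem_range.mp hi)
          omega
      _ = s * (m - 1) := by simp [mul_comm]
  -- basic dvd fact from the congruence
  have hcj : ((p:ℤ)) ^ m ∣ (c:ℤ) - ((a:ℤ) + j * d) := by
    have := (hc.symm).dvd
    have hcast : ((p ^ m : ℕ) : ℤ) ∣ ((c:ℤ) - ((a + j * d : ℕ) : ℤ)) := by
      exact_mod_cast this
    push_cast at hcast
    convert hcast using 2
  have hdiff : ∀ i : ℕ, ((a:ℤ) + j * d) - ((a:ℤ) + i * d) = ((j:ℤ) - i) * d := by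
    intro i; ring
  rcases le_or_gt m e with hme | hem
  -- Case 1 : m ≤ e
  · have hpd : (p:ℤ) ^ m ∣ (d:ℤ) := by
      have : (p ^ m : ℕ) ∣ d := dvd_trans (pow_dvd_pow p hme) pow_padicValNat_dvd
      exact_mod_cast this
    have hfac : ∀ i ∈ Finset.range s, (p:ℤ) ^ m ∣ ((c:ℤ) - ((a:ℤ) + i * d)) := by
      intro i _
      have : (c:ℤ) - ((a:ℤ) + i * d) = ((c:ℤ) - ((a:ℤ) + j * d)) + ((j:ℤ) - i) * d := by ring
      rw [this]
      exact dvd_add hcj (Dvd.dvd.mul_left hpd _)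
    have hprod : (p:ℤ) ^ (s * m) ∣ ∏ i ∈ Finset.range s, ((c:ℤ) - ((a:ℤ) + i * d)) := by
      have := Finset.prod_dvd_prod_of_dvd _ _ hfac
      simpa [Finset.prod_const, ← pow_mul, mul_comm] using this
    refine dvd_trans (pow_dvd_pow _ ?_) hprod
    have h1 : s * (m - 1) + s = s * m := by
      have h2 : m - 1 + 1 = m := by omega
      calc s * (m - 1) + s = s * ((m - 1) + 1) := by ring
        _ = s * m := by rw [h2]
    omega
  -- now e < m
  rcases lt_or_ge V ((s - 1) * e + m) with hcase2 | hge
  -- Case 2 : V + 1 ≤ (s-1)e + m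
  · have hped : (p:ℤ) ^ e ∣ (d:ℤ) := by
      have : (p ^ e : ℕ) ∣ d := pow_padicValNat_dvd
      exact_mod_cast this
    have hjm : j ∈ Finset.range s := Finset.mem_range.mpr hj
    rw [← Finset.mul_prod_erase _ _ hjm]
    have h2 : (p:ℤ) ^ ((s - 1) * e) ∣ ∏ i ∈ (Finset.range s).erase j, ((c:ℤ) - ((a:ℤ) + i * d)) := by
      have hfac : ∀ i ∈ (Finset.range s).erase j, (p:ℤ) ^ e ∣ ((c:ℤ) - ((a:ℤ) + i * d)) := by
        intro i _
        have heq : (c:ℤ) - ((a:ℤ) + i * d) = ((c:ℤ) - ((a:ℤ) + j * d)) + ((j:ℤ) - i) * d := by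
          ring
        rw [heq]
        refine dvd_add (dvd_trans (pow_dvd_pow _ hem.le) hcj) (Dvd.dvd.mul_left hped _)
      have := Finset.prod_dvd_prod_of_dvd _ _ hfac
      have hcard : ((Finset.range s).erase j).card = s - 1 := by
        rw [Finset.card_erase_of_mem hjm, Finset.card_range]
      simpa [Finset.prod_const, hcard, ← pow_mul, mul_comm] using this
    have hmul := mul_dvd_mul hcj h2
    rw [← pow_add] at hmul
    refine dvd_trans (pow_dvd_pow _ ?_) hmul
    omega
  -- Case 3
  · have hcase3 : V < s * e + padicValNat p (Nat.factorial s) + 1 := by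
      rcases max_cases ((s - 1) * e + m) (s * e + padicValNat p (Nat.factorial s) + 1) with
        ⟨hmx, _⟩ | ⟨hmx, _⟩ <;> rw [hmx] at hval
      · omega
      · exact hval
    -- (a) e ≤ v_p(a)
    have hea : e ≤ padicValNat p a := by
      by_contra hae
      push_neg at hae
      set α := padicValNat p a with hα
      have hvle : ∀ i < s, padicValNat p (a + i * d) ≤ α := by
        intro i _
        by_contra hcon
        push_neg at hcon
        have h1 : p ^ (α + 1) ∣ a + i * d :=
          dvd_trans (pow_dvd_pow p hcon) pow_padicValNat_dvd
        have h2 : p ^ (α + 1) ∣ i * d :=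
          Dvd.dvd.mul_left (dvd_trans (pow_dvd_pow p (by omega)) pow_padicValNat_dvd) i
        have h3 : p ^ (α + 1) ∣ a := by
          have := Nat.dvd_sub h1 h2
          simpa using this
        exact pow_succ_padicValNat_not_dvd ha.ne' h3
      have hVa : V ≤ s * α := by
        rw [hV]
        calc ∑ i ∈ Finset.range s, padicValNat p (a + i * d)
            ≤ ∑ _i ∈ Finset.range s, α := by
              apply Finset.sum_le_sum
              intro i hi
              exact hvle i (Finset.mem_range.mp hi)
          _ = s * α := by simp [mul_comm]
      have h5 : (s - 1) * (α + 1) ≤ (s - 1) * e := Nat.mul_le_mul_left _ (by omega)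
      have h6 : (s - 1) * (α + 1) + m ≤ V := by omega
      have h7 : (s - 1) * (α + 1) + α = s * α + (s - 1) := by
        have h8 : s - 1 + 1 = s := by omega
        calc (s - 1) * (α + 1) + α = (s - 1 + 1) * α + (s - 1) := by ring
          _ = s * α + (s - 1) := by rw [h8]
      omega
    set k := m - e with hk
    have hk1 : 1 ≤ k := by omega
    have hek : e + k = m := by omega
    -- (b) decompositions
    obtain ⟨d₂, hd₂⟩ : p ^ e ∣ d := pow_padicValNat_dvd
    have hpd₂ : ¬ p ∣ d₂ := by
      intro hdvd
      have : p ^ (e + 1) ∣ d := by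
        rw [hd₂, pow_succ]
        exact mul_dvd_mul_left _ hdvd
      exact pow_succ_padicValNat_not_dvd hd.ne' this
    obtain ⟨a₂, ha₂⟩ : p ^ e ∣ a := dvd_trans (pow_dvd_pow p hea) pow_padicValNat_dvd
    -- (c) cap
    have hcap : ∀ i < s, ¬ p ^ k ∣ (a₂ + i * d₂) := by
      intro i hi hdvd
      have hLi : a + i * d = p ^ e * (a₂ + i * d₂) := by
        rw [ha₂, hd₂]; ring
      have h1 : p ^ m ∣ a + i * d := by
        rw [hLi, ← hek, pow_add]
        exact mul_dvd_mul_left _ hdvd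
      have h2 := Nat.le_of_dvd (hLpos i) h1
      have hle := hL i hi
      have hpm : 1 ≤ p ^ m := Nat.one_le_pow _ _ (by omega)
      omega
    -- (d) s < p ^ k
    have hspk : s < p ^ k := by
      by_contra hcon
      push_neg at hcon
      haveI : NeZero (p ^ k) := ⟨(Nat.pow_pos (n := k) (by omega)).ne'⟩
      have hcop : Nat.Coprime d₂ (p ^ k) :=
        (Nat.Coprime.pow_right _ (((Nat.Prime.coprime_iff_not_dvd hp).mpr hpd₂)).symm)
      have hunit : IsUnit (d₂ : ZMod (p ^ k)) := (ZMod.isUnit_iff_coprime _ _).mpr hcop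
      obtain ⟨u, hu⟩ := hunit
      set i₀ := ((-(a₂ : ZMod (p ^ k))) * ↑u⁻¹).val with hi₀
      have hi₀lt : i₀ < p ^ k := ZMod.val_lt _
      have hzero : ((a₂ + i₀ * d₂ : ℕ) : ZMod (p ^ k)) = 0 := by
        push_cast
        rw [hi₀, ZMod.natCast_val, ZMod.cast_id]
        rw [← hu]
        have huu : (↑u⁻¹ * ↑u : ZMod (p ^ k)) = 1 := u.inv_mul
        calc (a₂ : ZMod (p ^ k)) + -↑a₂ * ↑u⁻¹ * ↑u = ↑a₂ + -↑a₂ * (↑u⁻¹ * ↑u) := by ring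
          _ = 0 := by rw [huu]; ring
      have hdvd : p ^ k ∣ a₂ + i₀ * d₂ := (ZMod.natCast_eq_zero_iff _ _).mp hzero
      exact hcap i₀ (by omega) hdvd
    -- (e) factorization of the factors
    obtain ⟨E, hE⟩ : ∃ E : ℤ, (c:ℤ) - ((a:ℤ) + j * d) = (p:ℤ) ^ m * E := hcj
    have hfac : ∀ i : ℕ, (c:ℤ) - ((a:ℤ) + i * d) =
        (p:ℤ) ^ e * ((p:ℤ) ^ k * E + ((j:ℤ) - i) * d₂) := by
      intro i
      have h1 : (c:ℤ) - ((a:ℤ) + i * d) = ((c:ℤ) - ((a:ℤ) + j * d)) + ((j:ℤ) - i) * d := by ring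
      rw [h1, hE]
      have h2 : (d:ℤ) = (p:ℤ) ^ e * d₂ := by exact_mod_cast congrArg (Nat.cast : ℕ → ℤ) hd₂
      rw [h2, ← hek]
      ring
    -- (f) per-factor divisibility
    set B : ℕ → ℕ := fun i => if i = j then k else min k (padicValNat p (Nat.dist j i)) with hB
    have key_dvd : ∀ i ∈ Finset.range s,
        (p:ℤ) ^ (B i) ∣ ((p:ℤ) ^ k * E + ((j:ℤ) - i) * d₂) := by
      intro i _
      by_cases hij : i = j
      · subst hij
        simp only [hB, if_pos rfl]
        have : ((i:ℤ) - i) * d₂ = 0 := by ring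
        rw [this, add_zero]
        exact Dvd.dvd.mul_right dvd_rfl E
      · simp only [hB, if_neg hij]
        apply dvd_add
        · exact Dvd.dvd.mul_right (pow_dvd_pow _ (min_le_left _ _)) E
        · apply Dvd.dvd.mul_right
          have hnat : p ^ min k (padicValNat p (Nat.dist j i)) ∣ Nat.dist j i :=
            dvd_trans (pow_dvd_pow _ (min_le_right _ _)) pow_padicValNat_dvd
          have h2 := (dvd_dist_iff (p ^ min k (padicValNat p (Nat.dist j i))) i j).mpr hnat
          push_cast at h2
          exact h2
    -- (g) the exponent sum bound
    set vps := padicValNat p (Nat.factorial s) with hvps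
    have key_sum : vps + 1 ≤ ∑ i ∈ Finset.range s, B i := by
      set N : ℕ → ℕ := fun t => ((Finset.range s).filter (fun i => i ≡ j [MOD p ^ t])).card with hN
      have step1 : ∀ t ∈ Finset.Icc 1 k, s / p ^ t ≤ N t := by
        intro t _
        exact count_ge (p ^ t) s j (Nat.pow_pos (n := t) (by omega))
      have step2 : s / p ^ k < N k := by
        have h0 : s / p ^ k = 0 := Nat.div_eq_of_lt hspk
        have h1 : j ∈ (Finset.range s).filter (fun i => i ≡ j [MOD p ^ k]) := by
          rw [Finset.mem_filter, Finset.mem_range]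
          exact ⟨hj, Nat.ModEq.refl _⟩
        have h2 : 0 < N k := Finset.card_pos.mpr ⟨j, h1⟩
        omega
      have step3 : ∑ t ∈ Finset.Icc 1 k, s / p ^ t < ∑ t ∈ Finset.Icc 1 k, N t := by
        apply Finset.sum_lt_sum step1
        exact ⟨k, Finset.mem_Icc.mpr ⟨hk1, le_refl k⟩, step2⟩
      have step4 : vps = ∑ t ∈ Finset.Icc 1 k, s / p ^ t := by
        rw [hvps]
        have hlog : Nat.log p s < k + 1 := by
          have := Nat.log_lt_of_lt_pow (by omega : s ≠ 0)
            (lt_of_lt_of_le hspk (pow_le_pow_right₀ (by omega) (by omega : k ≤ k + 1)))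
          omega
        rw [padicValNat_factorial hlog, ← Finset.Ico_add_one_right_eq_Icc]
      have step5 : ∑ t ∈ Finset.Icc 1 k, N t ≤ ∑ i ∈ Finset.range s, B i := by
        have hswap : ∑ t ∈ Finset.Icc 1 k, N t =
            ∑ i ∈ Finset.range s, ((Finset.Icc 1 k).filter (fun t => i ≡ j [MOD p ^ t])).card := by
          simp only [hN, Finset.card_filter]
          rw [Finset.sum_comm]
        rw [hswap]
        apply Finset.sum_le_sum
        intro i _
        by_cases hij : i = j
        · subst hij
          simp only [hB, if_pos rfl]
          calc ((Finset.Icc 1 k).filter _).card ≤ (Finset.Icc 1 k).card :=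
                Finset.card_filter_le _ _
            _ = k := by rw [Nat.card_Icc]; omega
        · simp only [hB, if_neg hij]
          have hsub : (Finset.Icc 1 k).filter (fun t => i ≡ j [MOD p ^ t]) ⊆
              Finset.Icc 1 (min k (padicValNat p (Nat.dist j i))) := by
            intro t ht
            rw [Finset.mem_filter, Finset.mem_Icc] at ht
            obtain ⟨⟨ht1, ht2⟩, hmod⟩ := ht
            rw [Finset.mem_Icc]
            refine ⟨ht1, le_min ht2 ?_⟩
            have hdvd : (p:ℤ) ^ t ∣ ((j:ℤ) - i) := by
              have := (hmod.symm).dvd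
              have hcast : ((p ^ t : ℕ) : ℤ) ∣ ((i:ℤ) - (j:ℤ)) := by exact_mod_cast this
              push_cast at hcast
              rw [show (j:ℤ) - i = -((i:ℤ) - j) by ring]
              exact dvd_neg.mpr hcast
            have hdn : p ^ t ∣ Nat.dist j i := by
              rw [← dvd_dist_iff]
              push_cast
              exact hdvd
            have hdist0 : Nat.dist j i ≠ 0 := by
              intro h0
              exact hij (Nat.eq_of_dist_eq_zero h0).symm
            exact (padicValNat_dvd_iff_le hdist0).mp hdn
          calc ((Finset.Icc 1 k).filter _).card
              ≤ (Finset.Icc 1 (min k (padicValNat p (Nat.dist j i)))).card :=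
                Finset.card_le_card hsub
            _ = min k (padicValNat p (Nat.dist j i)) := by rw [Nat.card_Icc]; omega
      omega
    -- assemble
    have hprod : ∏ i ∈ Finset.range s, ((c:ℤ) - ((a:ℤ) + i * d)) =
        (p:ℤ) ^ (e * s) * ∏ i ∈ Finset.range s, ((p:ℤ) ^ k * E + ((j:ℤ) - i) * d₂) := by
      rw [Finset.prod_congr rfl (fun i _ => hfac i), Finset.prod_mul_distrib,
        Finset.prod_const, Finset.card_range, ← pow_mul]
    rw [hprod]
    have h1 : (p:ℤ) ^ (∑ i ∈ Finset.range s, B i) ∣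
        ∏ i ∈ Finset.range s, ((p:ℤ) ^ k * E + ((j:ℤ) - i) * d₂) := by
      have := Finset.prod_dvd_prod_of_dvd _ _ key_dvd
      rwa [Finset.prod_pow_eq_pow_sum] at this
    have hes : e * s = s * e := Nat.mul_comm e s
    calc (p:ℤ) ^ (V + 1) ∣ (p:ℤ) ^ (e * s + (vps + 1)) := pow_dvd_pow _ (by omega)
      _ = (p:ℤ) ^ (e * s) * (p:ℤ) ^ (vps + 1) := pow_add _ _ _
      _ ∣ (p:ℤ) ^ (e * s) * ∏ i ∈ Finset.range s, ((p:ℤ) ^ k * E + ((j:ℤ) - i) * d₂) :=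
          mul_dvd_mul_left _ (dvd_trans (pow_dvd_pow _ key_sum) h1)


lemma diag (p a d s V : ℕ) (hp : p.Prime) (ha : 0 < a)
    (hV : V = ∑ i ∈ Finset.range s, padicValNat p (a + i * d)) :
    ¬ (p:ℤ) ^ (V + 1) ∣ ∏ i ∈ Finset.range s, ((0:ℤ) - (a + i * d)) := by
  haveI : Fact p.Prime := ⟨hp⟩
  intro hdvd
  set P : ℕ := ∏ i ∈ Finset.range s, (a + i * d) with hPdef
  have hP0 : P ≠ 0 := by
    rw [hPdef]
    exact Finset.prod_ne_zero_iff.mpr (fun i _ => by positivity)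
  have hval : padicValNat p P = V := by
    rw [hV, hPdef, ← Nat.factorization_def _ hp, Nat.factorization_prod (fun i _ => by positivity)]
    simp only [Finset.sum_apply']
    exact Finset.sum_congr rfl (fun i _ => Nat.factorization_def _ hp)
  have hprod : ∏ i ∈ Finset.range s, ((0:ℤ) - ((a:ℤ) + i * d)) = (-1) ^ s * (P : ℤ) := by
    calc ∏ i ∈ Finset.range s, ((0:ℤ) - ((a:ℤ) + i * d))
        = ∏ i ∈ Finset.range s, ((-1) * ((a:ℤ) + i * d)) :=
          Finset.prod_congr rfl (fun i _ => by ring)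
      _ = (∏ _i ∈ Finset.range s, (-1:ℤ)) * ∏ i ∈ Finset.range s, ((a:ℤ) + i * d) :=
          Finset.prod_mul_distrib
      _ = (-1) ^ s * (P : ℤ) := by
          rw [Finset.prod_const, Finset.card_range, hPdef]
          push_cast
          ring
  rw [hprod] at hdvd
  have h2 : (p:ℤ) ^ (V + 1) ∣ (P : ℤ) := by
    have h3 := Dvd.dvd.mul_left hdvd ((-1 : ℤ) ^ s)
    have h4 : ((-1 : ℤ) ^ s) * ((-1 : ℤ) ^ s * (P:ℤ)) = (P:ℤ) := by
      rw [← mul_assoc, ← mul_pow]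
      simp
    rwa [h4] at h3
  have h5 : p ^ (V + 1) ∣ P := by exact_mod_cast h2
  exact pow_succ_padicValNat_not_dvd hP0 (by rwa [hval])

lemma indep {ι : Type*} [Fintype ι] [DecidableEq ι] (p V : ℕ) (hp : p.Prime)
    (M : ι → ι → ℤ)
    (hdiag : ∀ i, ¬ (p:ℤ) ^ (V + 1) ∣ M i i)
    (hoff : ∀ i j, i ≠ j → (p:ℤ) ^ (V + 1) ∣ M i j)
    (z : ι → ℤ) (hrel : ∀ j, ∑ i, z i * M i j = 0) : ∀ i, z i = 0 := by
  have key : ∀ t : ℕ, ∀ i, (p:ℤ) ^ t ∣ z i := by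
    intro t
    induction t with
    | zero => intro i; simp
    | succ t ih =>
      intro i
      have hsplit : z i * M i i = - ∑ i' ∈ Finset.univ.erase i, z i' * M i' i := by
        have := hrel i
        rw [← Finset.add_sum_erase _ _ (Finset.mem_univ i)] at this
        linarith
      have hrhs : (p:ℤ) ^ (t + (V + 1)) ∣ z i * M i i := by
        rw [hsplit]
        rw [dvd_neg]
        apply Finset.dvd_sum
        intro i' hi'
        rw [pow_add]
        exact mul_dvd_mul (ih i') (hoff i' i (Finset.ne_of_mem_erase hi'))
      by_cases hzi : z i = 0
      · simp [hzi]
      have hMne : M i i ≠ 0 := fun h => hdiag i (h ▸ dvd_zero _)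
      set x := (z i).natAbs with hx
      set y := (M i i).natAbs with hy
      have hx0 : x ≠ 0 := Int.natAbs_ne_zero.mpr hzi
      have hy0 : y ≠ 0 := Int.natAbs_ne_zero.mpr hMne
      have hnat : p ^ (t + (V + 1)) ∣ x * y := by
        have := Int.natAbs_dvd_natAbs.mpr hrhs
        rwa [Int.natAbs_mul, Int.natAbs_pow, Int.natAbs_natCast] at this
      have hyle : y.factorization p ≤ V := by
        by_contra hcon
        push_neg at hcon
        have : p ^ (V + 1) ∣ y := (Nat.Prime.pow_dvd_iff_le_factorization hp hy0).mpr hcon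
        apply hdiag i
        have := Int.natCast_dvd.mpr this
        rwa [Nat.cast_pow] at this
      have hfac : t + (V + 1) ≤ x.factorization p + y.factorization p := by
        have := (Nat.Prime.pow_dvd_iff_le_factorization hp (Nat.mul_ne_zero hx0 hy0)).mp hnat
        rwa [Nat.factorization_mul hx0 hy0, Finsupp.add_apply] at this
      have hxge : t + 1 ≤ x.factorization p := by omega
      have : p ^ (t + 1) ∣ x := (Nat.Prime.pow_dvd_iff_le_factorization hp hx0).mpr hxge
      have := Int.natCast_dvd.mpr this
      rwa [Nat.cast_pow] at this
  intro i
  by_contra hzi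
  set x := (z i).natAbs with hx
  have hx0 : x ≠ 0 := Int.natAbs_ne_zero.mpr hzi
  have h1 : p ^ x ∣ x := by
    have := Int.natAbs_dvd_natAbs.mpr (key x i)
    rwa [Int.natAbs_pow, Int.natAbs_natCast] at this
  have h2 := Nat.le_of_dvd (Nat.pos_of_ne_zero hx0) h1
  have h3 := Nat.lt_pow_self (n := x) hp.one_lt
  omega


variable {n : ℕ}

noncomputable def chi (S : Finset (Fin n)) : Finset (Fin n) → ℚ :=
  fun B => if S ⊆ B then 1 else 0

noncomputable def MS (A : Finset (Fin n)) (t : ℕ) : Submodule ℚ (Finset (Fin n) → ℚ) :=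
  Submodule.span ℚ (chi '' {S : Finset (Fin n) | S ⊆ A ∧ S.card ≤ t})

lemma MS_mono (A : Finset (Fin n)) {t u : ℕ} (h : t ≤ u) : MS A t ≤ MS A u :=
  Submodule.span_mono (Set.image_mono (fun S hS => ⟨hS.1, hS.2.trans h⟩))

lemma MS_step (A : Finset (Fin n)) (t : ℕ) (z : ℚ) (f : Finset (Fin n) → ℚ)
    (hf : f ∈ MS A t) :
    (fun B => (z - ((A ∩ B).card : ℚ)) * f B) ∈ MS A (t + 1) := by
  classical
  let L : (Finset (Fin n) → ℚ) →ₗ[ℚ] (Finset (Fin n) → ℚ) :=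
    { toFun := fun g => fun B => (z - ((A ∩ B).card : ℚ)) * g B
      map_add' := fun g h => by funext B; simp [Pi.add_apply]; ring
      map_smul' := fun c g => by funext B; simp [Pi.smul_apply]; ring }
  have hL : L f ∈ MS A (t + 1) := by
    have hmap : Submodule.map L (MS A t) ≤ MS A (t + 1) := by
      rw [MS, Submodule.map_span, Submodule.span_le]
      rintro _ ⟨_, ⟨S, ⟨hSA, hSt⟩, rfl⟩, rfl⟩
      have hkey : L (chi S) = z • chi S - ∑ x ∈ A, chi (insert x S) := by
        funext B
        simp only [L, LinearMap.coe_mk, AddHom.coe_mk, Pi.sub_apply, Pi.smul_apply,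
          smul_eq_mul, Finset.sum_apply]
        by_cases hSB : S ⊆ B
        · have h1 : ∀ x ∈ A, chi (insert x S) B = if x ∈ B then (1:ℚ) else 0 := by
            intro x _
            unfold chi
            by_cases hx : x ∈ B
            · simp [hx, Finset.insert_subset_iff, hSB]
            · simp [hx, Finset.insert_subset_iff]
          rw [Finset.sum_congr rfl h1, Finset.sum_boole, Finset.filter_mem_eq_inter]
          unfold chi
          simp [hSB]
        · have h1 : ∀ x ∈ A, chi (insert x S) B = 0 := by
            intro x _
            unfold chi
            have : ¬ insert x S ⊆ B := fun hc => hSB ((Finset.subset_insert _ _).trans hc)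
            simp [this]
          rw [Finset.sum_congr rfl h1]
          unfold chi
          simp [hSB]
      rw [SetLike.mem_coe, hkey]
      apply Submodule.sub_mem
      · apply Submodule.smul_mem
        apply Submodule.subset_span
        exact ⟨S, ⟨hSA, hSt.trans (Nat.le_succ t)⟩, rfl⟩
      · apply Submodule.sum_mem
        intro x hx
        apply Submodule.subset_span
        refine ⟨insert x S, ⟨Finset.insert_subset hx hSA, ?_⟩, rfl⟩
        exact (Finset.card_insert_le _ _).trans (by omega)
    exact hmap ⟨f, hf, rfl⟩
  exact hL

lemma MS_prod (A : Finset (Fin n)) (z : ℕ → ℚ) (u : ℕ) :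
    (fun B => ∏ i ∈ Finset.range u, (z i - ((A ∩ B).card : ℚ))) ∈ MS A u := by
  classical
  induction u with
  | zero =>
    have : (fun _B : Finset (Fin n) => (1:ℚ)) ∈ MS A 0 := by
      apply Submodule.subset_span
      refine ⟨∅, ⟨Finset.empty_subset _, le_refl 0⟩, ?_⟩
      funext B
      simp [chi]
    simpa using this
  | succ u ih =>
    have hstep := MS_step A u (z u) _ ih
    have heq : (fun B => ∏ i ∈ Finset.range (u + 1), (z i - ((A ∩ B).card : ℚ))) =
        (fun B => (z u - ((A ∩ B).card : ℚ)) *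
          ∏ i ∈ Finset.range u, (z i - ((A ∩ B).card : ℚ))) := by
      funext B
      rw [Finset.prod_range_succ]
      ring
    rw [heq]
    exact hstep

theorem stmt_12 (n p m q a d s : ℕ) (hp : p.Prime) (hq : q = p ^ m)
    (ha : 0 < a) (hd : 0 < d)
    (hL : ∀ i < s, a + i * d ≤ q - 1)
    (hval : ∑ i ∈ Finset.range s, padicValNat p (a + i * d) <
      max ((s - 1) * padicValNat p d + padicValNat p q)
        (s * padicValNat p d + padicValNat p (Nat.factorial s) + 1))
    (F : Finset (Finset (Fin n)))
    (hF : ∀ A ∈ F, ∀ B ∈ F, A ≠ B → ∃ i < s, (A \ B).card ≡ a + i * d [MOD q]) :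
    F.card ≤ ∑ i ∈ Finset.range (s + 1), n.choose i := by
  classical
  haveI : Fact p.Prime := ⟨hp⟩
  subst hq
  -- trivial case s = 0
  rcases Nat.eq_zero_or_pos s with hs0 | hs
  · subst hs0
    have hcard : F.card ≤ 1 := by
      apply Finset.card_le_one.mpr
      intro A hA B hB
      by_contra hne
      obtain ⟨i, hi, _⟩ := hF A hA B hB hne
      omega
    simpa using hcard
  -- trivial case m = 0
  rcases Nat.eq_zero_or_pos m with hm0 | hm
  · subst hm0
    have := hL 0 hs
    simp at this
    omega
  -- rewrite padicValNat p (p ^ m) = m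
  rw [padicValNat.prime_pow] at hval
  set V := ∑ i ∈ Finset.range s, padicValNat p (a + i * d) with hV
  set M : Finset (Fin n) → Finset (Fin n) → ℤ :=
    fun A B => ∏ i ∈ Finset.range s, (((A \ B).card : ℤ) - ((a : ℤ) + i * d)) with hM
  have key1 : ∀ A ∈ F, ∀ B ∈ F, A ≠ B → (p:ℤ) ^ (V + 1) ∣ M A B := by
    intro A hA B hB hne
    obtain ⟨j, hj, hcong⟩ := hF A hA B hB hne
    exact arith p m a d s hp hm hs ha hd hL hval _ j hj hcong
  have key2 : ∀ A : Finset (Fin n), ¬ (p:ℤ) ^ (V + 1) ∣ M A A := by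
    intro A
    have h0 : ((A \ A).card : ℤ) = 0 := by simp
    have : M A A = ∏ i ∈ Finset.range s, ((0:ℤ) - ((a : ℤ) + i * d)) := by
      rw [hM]
      exact Finset.prod_congr rfl (fun i _ => by rw [h0])
    rw [this]
    exact diag p a d s V hp ha hV
  -- the ℚ-valued functions
  set w : Finset (Fin n) → (Finset (Fin n) → ℚ) :=
    fun A B => ∏ i ∈ Finset.range s, (((A \ B).card : ℚ) - ((a : ℚ) + i * d)) with hw
  have hwM : ∀ A B, w A B = ((M A B : ℤ) : ℚ) := by
    intro A B
    rw [hw, hM]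
    push_cast
    rfl
  -- linear independence
  have li : LinearIndependent ℚ (fun A : {x // x ∈ F} => w A.1) := by
    rw [Fintype.linearIndependent_iff]
    intro g hg A
    set N : ℕ := ∏ A' : {x // x ∈ F}, (g A').den with hN
    have hN0 : N ≠ 0 := Finset.prod_ne_zero_iff.mpr (fun A' _ => (g A').den_nz)
    have hdenN : ∀ A' : {x // x ∈ F}, (g A').den ∣ N := fun A' =>
      Finset.dvd_prod_of_mem _ (Finset.mem_univ A')
    set z : {x // x ∈ F} → ℤ := fun A' => (g A').num * ((N / (g A').den : ℕ) : ℤ) with hz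
    have hzQ : ∀ A', ((z A' : ℤ) : ℚ) = g A' * N := by
      intro A'
      have hden : (((g A').den : ℕ) : ℚ) ≠ 0 := by
        exact_mod_cast (g A').den_nz
      obtain ⟨cq, hc⟩ := hdenN A'
      have hdiv : N / (g A').den = cq := by
        rw [hc]
        exact Nat.mul_div_cancel_left _ (g A').pos
      rw [hz]
      simp only [hdiv]
      push_cast [hc]
      have hmm : ((g A').num : ℚ) = g A' * ((g A').den : ℚ) :=
        (div_eq_iff hden).mp (Rat.num_div_den (g A'))
      rw [hmm, mul_assoc]
    have hgB : ∀ B : {x // x ∈ F}, ∑ A' : {x // x ∈ F}, g A' * w A'.1 B.1 = 0 := by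
      intro B
      have hcf := congrFun hg B.1
      simpa [Finset.sum_apply, Pi.smul_apply, smul_eq_mul] using hcf
    have hrel : ∀ B : {x // x ∈ F}, ∑ A' : {x // x ∈ F}, z A' * M A'.1 B.1 = 0 := by
      intro B
      have hcast : ((∑ A' : {x // x ∈ F}, z A' * M A'.1 B.1 : ℤ) : ℚ) = 0 := by
        push_cast
        have hterm : ∀ A' : {x // x ∈ F},
            ((z A' : ℤ) : ℚ) * ((M A'.1 B.1 : ℤ) : ℚ) = (N : ℚ) * (g A' * w A'.1 B.1) := by
          intro A'
          rw [hzQ A', hwM]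
          ring
        rw [Finset.sum_congr rfl (fun A' _ => hterm A'), ← Finset.mul_sum, hgB B, mul_zero]
      exact_mod_cast hcast
    have hz0 := indep p V hp (fun A' B' : {x // x ∈ F} => M A'.1 B'.1)
      (fun i => key2 i.1)
      (fun i j hij => key1 i.1 i.2 j.1 j.2 (fun hc => hij (Subtype.ext hc)))
      z hrel
    have hzA := hzQ A
    rw [hz0 A] at hzA
    have hNne : ((N : ℕ) : ℚ) ≠ 0 := by exact_mod_cast hN0
    have := hzA.symm
    push_cast at this
    rcases mul_eq_zero.mp this with h | h
    · exact h
    · exact absurd h hNne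
  -- span
  have hspan : Set.range (fun A : {x // x ∈ F} => w A.1) ≤
      ↑(Submodule.span ℚ (chi '' {S : Finset (Fin n) | S.card ≤ s})) := by
    rintro _ ⟨A, rfl⟩
    have h1 : w A.1 ∈ MS A.1 s := by
      have h2 := MS_prod A.1 (fun i => (A.1.card : ℚ) - ((a : ℚ) + i * d)) s
      have h3 : (fun B => ∏ i ∈ Finset.range s,
          (((A.1.card : ℚ) - ((a : ℚ) + i * d)) - ((A.1 ∩ B).card : ℚ))) = w A.1 := by
        funext B
        rw [hw]
        apply Finset.prod_congr rfl
        intro i _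
        have hnat : (A.1 ∩ B).card + (A.1 \ B).card = A.1.card :=
          Finset.card_inter_add_card_sdiff A.1 B
        have hcard : ((A.1 \ B).card : ℚ) = (A.1.card : ℚ) - ((A.1 ∩ B).card : ℚ) := by
          have : ((A.1 ∩ B).card : ℚ) + ((A.1 \ B).card : ℚ) = (A.1.card : ℚ) := by
            exact_mod_cast congrArg (Nat.cast : ℕ → ℚ) hnat
          linarith
        rw [hcard]
        ring
      rw [← h3]
      exact h2
    exact Submodule.span_mono (Set.image_mono (fun S hS => hS.2)) h1
  set T : Finset (Finset (Fin n)) := Finset.univ.filter (fun S => S.card ≤ s) with hT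
  set W : Finset (Finset (Fin n) → ℚ) := T.image chi with hW
  have hTcoe : (↑T : Set (Finset (Fin n))) = {S : Finset (Fin n) | S.card ≤ s} := by
    ext S
    simp [hT]
  have hspan' : Set.range (fun A : {x // x ∈ F} => w A.1) ≤
      Submodule.span ℚ (↑W : Set (Finset (Fin n) → ℚ)) := by
    rw [hW, Finset.coe_image, hTcoe]
    exact hspan
  have hcards := linearIndependent_le_span_aux' _ li (↑W : Set (Finset (Fin n) → ℚ)) hspan'
  simp only [Finset.coe_sort_coe, Fintype.card_coe] at hcards
  have hWT : W.card ≤ T.card := Finset.card_image_le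
  have hTsum : T.card ≤ ∑ i ∈ Finset.range (s + 1), n.choose i := by
    have hsub : T ⊆ (Finset.range (s + 1)).biUnion
        (fun i => Finset.powersetCard i (Finset.univ : Finset (Fin n))) := by
      intro S hS
      rw [hT, Finset.mem_filter] at hS
      rw [Finset.mem_biUnion]
      exact ⟨S.card, Finset.mem_range.mpr (by omega),
        Finset.mem_powersetCard.mpr ⟨Finset.subset_univ _, rfl⟩⟩
    calc T.card ≤ _ := Finset.card_le_card hsub
      _ ≤ ∑ i ∈ Finset.range (s + 1),
            (Finset.powersetCard i (Finset.univ : Finset (Fin n))).card :=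
          Finset.card_biUnion_le
      _ = ∑ i ∈ Finset.range (s + 1), n.choose i := by
          apply Finset.sum_congr rfl
          intro i _
          rw [Finset.card_powersetCard, Finset.card_univ, Fintype.card_fin]
  omega
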